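/- For every behaviour (E₁,E₂,ω₁,ω₂) in the quantum set Q there exist unit vectors n₁, n₂, k in ℝ³ and a vector m in ℝ³ with ‖m‖ ≤ 1 such that Eₓ = nₓ·m and (1 + nₓ·k)/2 ≤ ωₓ for x = 1,2; i.e., every point of Q is realized without shared randomness by a two-dimensional representation ρₓ = (1 + nₓ·σ)/2, M = m·σ, O = (1 + k·σ)/2, with σ the vector of Pauli matrices. -/

import Mathlib

open scoped ComplexOrder

noncomputable section

/-- A behaviour `(E, ω)` admits a (finite-dimensional) quantum representation. -/
def IsQuantumRep (E ω : Fin 2 → ℝ) : Prop :=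
  ∃ (d : ℕ) (ρ : Fin 2 → Matrix (Fin d) (Fin d) ℂ)
    (M O : Matrix (Fin d) (Fin d) ℂ) (v : Fin d → ℂ),
    (∀ x, (ρ x).PosSemidef) ∧ (∀ x, (ρ x).trace = 1) ∧
    M.IsHermitian ∧ (1 - M).PosSemidef ∧ (1 + M).PosSemidef ∧
    O.IsHermitian ∧ O.mulVec v = 0 ∧ (∑ i, Complex.normSq (v i)) = 1 ∧
    (O - (1 - Matrix.vecMulVec v (star v))).PosSemidef ∧
    (∀ x, (ρ x * M).trace = (E x : ℂ)) ∧
    (∀ x, ((ρ x * O).trace).re ≤ ω x)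

/-- The quantum set `Q`: all finite convex combinations of behaviours with a
quantum representation. -/
def QuantumSet : Set ((Fin 2 → ℝ) × (Fin 2 → ℝ)) :=
  convexHull ℝ {b | IsQuantumRep b.1 b.2}

/-! ### Auxiliary scalar lemmas -/

/-- Cauchy–Schwarz step: concavity of the geometric mean. -/
lemma aux_sqrt_comb {A₁ B₁ A₂ B₂ t s : ℝ} (hA₁ : 0 ≤ A₁) (hB₁ : 0 ≤ B₁)
    (hA₂ : 0 ≤ A₂) (hB₂ : 0 ≤ B₂) (ht : 0 ≤ t) (hs : 0 ≤ s) :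
    t * Real.sqrt (A₁ * B₁) + s * Real.sqrt (A₂ * B₂) ≤
      Real.sqrt ((t * A₁ + s * A₂) * (t * B₁ + s * B₂)) := by
  set x := Real.sqrt (A₁ * B₁) with hxdef
  set y := Real.sqrt (A₂ * B₂) with hydef
  have hx0 : 0 ≤ x := Real.sqrt_nonneg _
  have hy0 : 0 ≤ y := Real.sqrt_nonneg _
  have hx2 : x ^ 2 = A₁ * B₁ := Real.sq_sqrt (mul_nonneg hA₁ hB₁)
  have hy2 : y ^ 2 = A₂ * B₂ := Real.sq_sqrt (mul_nonneg hA₂ hB₂)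
  have hxy : x * y = Real.sqrt ((A₁ * B₂) * (A₂ * B₁)) := by
    rw [hxdef, hydef, ← Real.sqrt_mul (mul_nonneg hA₁ hB₁)]
    ring_nf
  have hxy' : x * y ≤ (A₁ * B₂ + A₂ * B₁) / 2 := by
    rw [hxy]
    have h1 : (A₁ * B₂) * (A₂ * B₁) ≤ ((A₁ * B₂ + A₂ * B₁) / 2) ^ 2 := by
      nlinarith [sq_nonneg (A₁ * B₂ - A₂ * B₁)]
    calc Real.sqrt ((A₁ * B₂) * (A₂ * B₁)) ≤ Real.sqrt (((A₁ * B₂ + A₂ * B₁) / 2) ^ 2) :=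
          Real.sqrt_le_sqrt h1
      _ = (A₁ * B₂ + A₂ * B₁) / 2 := Real.sqrt_sq (by positivity)
  have hts := mul_le_mul_of_nonneg_left hxy' (mul_nonneg ht hs)
  have e1 : t ^ 2 * (A₁ * B₁) = (t * x) ^ 2 := by rw [← hx2]; ring
  have e2 : s ^ 2 * (A₂ * B₂) = (s * y) ^ 2 := by rw [← hy2]; ring
  have hsq : (t * x + s * y) ^ 2 ≤ (t * A₁ + s * A₂) * (t * B₁ + s * B₂) := by
    nlinarith [e1, e2, hts]
  exact (Real.le_sqrt (by positivity) (by positivity)).mpr hsq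

lemma aux_sqrt_cross {A B c d e : ℝ} (hA : 0 ≤ A) (hB : 0 ≤ B) (hc : 0 ≤ c) :
    Real.sqrt (A * B) + c * d * e ≤ Real.sqrt ((A + c * d ^ 2) * (B + c * e ^ 2)) := by
  rcases le_or_gt (c * d * e) 0 with hneg | hpos
  · have h1 : Real.sqrt (A * B) ≤ Real.sqrt ((A + c * d ^ 2) * (B + c * e ^ 2)) := by
      apply Real.sqrt_le_sqrt
      nlinarith [mul_nonneg (mul_nonneg hc (sq_nonneg d)) hB,
        mul_nonneg (mul_nonneg hc (sq_nonneg e)) hA,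
        mul_nonneg (mul_nonneg hc (sq_nonneg d)) (mul_nonneg hc (sq_nonneg e))]
    linarith
  · have hsA : Real.sqrt A ^ 2 = A := Real.sq_sqrt hA
    have hsB : Real.sqrt B ^ 2 = B := Real.sq_sqrt hB
    have hAB : Real.sqrt (A * B) = Real.sqrt A * Real.sqrt B := Real.sqrt_mul hA B
    have key : 2 * (d * e) * (Real.sqrt A * Real.sqrt B) ≤ A * e ^ 2 + d ^ 2 * B := by
      nlinarith [sq_nonneg (e * Real.sqrt A - d * Real.sqrt B)]
    have hsq : (Real.sqrt (A * B) + c * d * e) ^ 2 ≤ (A + c * d ^ 2) * (B + c * e ^ 2) := by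
      rw [hAB]
      have hc' : c * (2 * (d * e) * (Real.sqrt A * Real.sqrt B)) ≤ c * (A * e ^ 2 + d ^ 2 * B) :=
        mul_le_mul_of_nonneg_left key hc
      nlinarith [sq_nonneg (c * d * e), mul_nonneg (mul_nonneg hc (sq_nonneg d)) (mul_nonneg hc (sq_nonneg e))]
    have hpos' : 0 ≤ Real.sqrt (A * B) + c * d * e := by positivity
    exact (Real.le_sqrt hpos' (by positivity)).mpr hsq

/-- Joint concavity of `F(E,g) = E*g + √((1-E²)(1-g²))` on `[-1,1]²`. -/
lemma aux_F_concave {E₁ g₁ E₂ g₂ t s : ℝ} (hE₁ : E₁ ^ 2 ≤ 1) (hg₁ : g₁ ^ 2 ≤ 1)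
    (hE₂ : E₂ ^ 2 ≤ 1) (hg₂ : g₂ ^ 2 ≤ 1) (ht : 0 ≤ t) (hs : 0 ≤ s) (hts : t + s = 1) :
    t * (E₁ * g₁ + Real.sqrt ((1 - E₁ ^ 2) * (1 - g₁ ^ 2)))
      + s * (E₂ * g₂ + Real.sqrt ((1 - E₂ ^ 2) * (1 - g₂ ^ 2)))
    ≤ (t * E₁ + s * E₂) * (t * g₁ + s * g₂)
      + Real.sqrt ((1 - (t * E₁ + s * E₂) ^ 2) * (1 - (t * g₁ + s * g₂) ^ 2)) := by
  have hA₁ : (0:ℝ) ≤ 1 - E₁ ^ 2 := by linarith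
  have hB₁ : (0:ℝ) ≤ 1 - g₁ ^ 2 := by linarith
  have hA₂ : (0:ℝ) ≤ 1 - E₂ ^ 2 := by linarith
  have hB₂ : (0:ℝ) ≤ 1 - g₂ ^ 2 := by linarith
  have idA : 1 - (t * E₁ + s * E₂) ^ 2
      = (t * (1 - E₁ ^ 2) + s * (1 - E₂ ^ 2)) + (t * s) * (E₁ - E₂) ^ 2 := by
    have h : s = 1 - t := by linarith
    subst h; ring
  have idB : 1 - (t * g₁ + s * g₂) ^ 2
      = (t * (1 - g₁ ^ 2) + s * (1 - g₂ ^ 2)) + (t * s) * (g₁ - g₂) ^ 2 := by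
    have h : s = 1 - t := by linarith
    subst h; ring
  have idE : (t * E₁ + s * E₂) * (t * g₁ + s * g₂)
      = t * (E₁ * g₁) + s * (E₂ * g₂) - (t * s) * ((E₁ - E₂) * (g₁ - g₂)) := by
    have h : s = 1 - t := by linarith
    subst h; ring
  have h1 := aux_sqrt_comb hA₁ hB₁ hA₂ hB₂ ht hs
  have h2 := aux_sqrt_cross (A := t * (1 - E₁ ^ 2) + s * (1 - E₂ ^ 2))
      (B := t * (1 - g₁ ^ 2) + s * (1 - g₂ ^ 2)) (c := t * s) (d := E₁ - E₂) (e := g₁ - g₂)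
      (by positivity) (by positivity) (mul_nonneg ht hs)
  rw [idA, idB, idE]
  have : t * s * (E₁ - E₂) * (g₁ - g₂) = t * s * ((E₁ - E₂) * (g₁ - g₂)) := by ring
  linarith [h1, h2, this.ge]

/-! ### Auxiliary matrix lemmas -/

section PsdSqrtCompat
open scoped MatrixOrder

/-- square root of a positive semidefinite matrix -/
def Matrix.PosSemidef.sqrt {d : ℕ} {A : Matrix (Fin d) (Fin d) ℂ} (_hA : A.PosSemidef) :
    Matrix (Fin d) (Fin d) ℂ := CFC.sqrt A

lemma Matrix.PosSemidef.sqrt_mul_self {d : ℕ} {A : Matrix (Fin d) (Fin d) ℂ}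
    (hA : A.PosSemidef) : hA.sqrt * hA.sqrt = A :=
  CFC.sqrt_mul_sqrt_self A hA.nonneg

lemma Matrix.PosSemidef.posSemidef_sqrt {d : ℕ} {A : Matrix (Fin d) (Fin d) ℂ}
    (hA : A.PosSemidef) : hA.sqrt.PosSemidef :=
  Matrix.nonneg_iff_posSemidef.mp (CFC.sqrt_nonneg A)

end PsdSqrtCompat

variable {d : ℕ}

/-- squared norm of a complex vector -/
def cnp (u : Fin d → ℂ) : ℝ := ∑ i, Complex.normSq (u i)

lemma cnp_nonneg (u : Fin d → ℂ) : 0 ≤ cnp u :=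
  Finset.sum_nonneg fun _ _ => Complex.normSq_nonneg _

lemma star_dot_self (u : Fin d → ℂ) :
    dotProduct (star u) u = (cnp u : ℂ) := by
  simp only [dotProduct, cnp, Pi.star_apply, Complex.ofReal_sum]
  exact Finset.sum_congr rfl fun i _ => by
    rw [Complex.star_def, mul_comm, Complex.mul_conj]

lemma re_dot_le (u w : Fin d → ℂ) :
    (dotProduct (star u) w).re ≤ Real.sqrt (cnp u) * Real.sqrt (cnp w) := by
  have h1 : (dotProduct (star u) w).re ≤ ∑ i, ‖u i‖ * ‖w i‖ := by
    rw [dotProduct, Complex.re_sum]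
    refine Finset.sum_le_sum fun i _ => ?_
    calc (star u i * w i).re ≤ ‖star u i * w i‖ := Complex.re_le_norm _
      _ = ‖u i‖ * ‖w i‖ := by
          simp [Complex.norm_conj]
  refine h1.trans ?_
  have h2 : (∑ i, ‖u i‖ * ‖w i‖) ^ 2 ≤ cnp u * cnp w := by
    have := Finset.sum_mul_sq_le_sq_mul_sq Finset.univ (fun i => ‖u i‖)
      (fun i => ‖w i‖)
    simpa only [cnp, Complex.sq_norm] using this
  have h3 : 0 ≤ ∑ i, ‖u i‖ * ‖w i‖ :=
    Finset.sum_nonneg fun i _ => mul_nonneg (norm_nonneg _) (norm_nonneg _)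
  calc (∑ i, ‖u i‖ * ‖w i‖)
      ≤ Real.sqrt (cnp u * cnp w) :=
        (Real.le_sqrt h3 (mul_nonneg (cnp_nonneg u) (cnp_nonneg w))).mpr h2
    _ = Real.sqrt (cnp u) * Real.sqrt (cnp w) := Real.sqrt_mul (cnp_nonneg u) _

lemma herm_shift {C : Matrix (Fin d) (Fin d) ℂ} (hC : C.IsHermitian) (x y : Fin d → ℂ) :
    dotProduct (star (C.mulVec x)) y = dotProduct (star x) (C.mulVec y) := by
  rw [Matrix.star_mulVec, hC.eq, ← Matrix.dotProduct_mulVec]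

lemma psd_trace_re_nonneg {X : Matrix (Fin d) (Fin d) ℂ} (hX : X.PosSemidef) :
    0 ≤ X.trace.re := by
  have hdiag : ∀ i, 0 ≤ (X i i).re := by
    intro i
    have h := hX.re_dotProduct_nonneg (Pi.single i 1)
    have he : dotProduct (star (Pi.single i 1)) (X.mulVec (Pi.single i 1)) = X i i := by
      simp [dotProduct, Matrix.mulVec, Pi.single_apply, Finset.mul_sum,
        apply_ite, Finset.sum_ite_eq, Finset.sum_ite_eq']
    rw [he] at h
    exact h
  rw [Matrix.trace, Complex.re_sum]
  exact Finset.sum_nonneg fun i _ => hdiag i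

lemma psd_trace_mul_re_nonneg {A B : Matrix (Fin d) (Fin d) ℂ}
    (hA : A.PosSemidef) (hB : B.PosSemidef) : 0 ≤ ((A * B).trace).re := by
  set C := hB.sqrt with hCdef
  have hCC : C * C = B := hB.sqrt_mul_self
  have hCh : C.IsHermitian := hB.posSemidef_sqrt.1
  have hpsd := hA.conjTranspose_mul_mul_same C
  rw [hCh.eq] at hpsd
  have ht : (A * B).trace = (C * A * C).trace := by
    rw [← hCC, ← mul_assoc, Matrix.trace_mul_cycle]
  rw [ht]
  exact psd_trace_re_nonneg hpsd

lemma psd_quadform_le_trace {X : Matrix (Fin d) (Fin d) ℂ} (hX : X.PosSemidef) (x : Fin d → ℂ) :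
    (dotProduct (star x) (X.mulVec x)).re ≤ X.trace.re * cnp x := by
  set C := hX.sqrt with hCdef
  have hCC : C * C = X := hX.sqrt_mul_self
  have hCh : C.IsHermitian := hX.posSemidef_sqrt.1
  have h1 : dotProduct (star x) (X.mulVec x) = (cnp (C.mulVec x) : ℂ) := by
    rw [← hCC, ← Matrix.mulVec_mulVec, ← herm_shift hCh, star_dot_self]
  rw [h1]
  rw [Complex.ofReal_re]
  have hrow : ∀ i, Complex.normSq (C.mulVec x i) ≤ (∑ j, Complex.normSq (C i j)) * cnp x := by
    intro i
    have hmv : C.mulVec x i = ∑ j, C i j * x j := by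
      simp [Matrix.mulVec, dotProduct]
    have habs : ‖C.mulVec x i‖ ≤ ∑ j, ‖C i j‖ * ‖x j‖ := by
      rw [hmv]
      calc ‖∑ j, C i j * x j‖ = ‖∑ j, C i j * x j‖ := rfl
        _ ≤ ∑ j, ‖C i j * x j‖ := norm_sum_le _ _
        _ = ∑ j, ‖C i j‖ * ‖x j‖ := by
            simp
    have hcs : (∑ j, ‖C i j‖ * ‖x j‖) ^ 2
        ≤ (∑ j, Complex.normSq (C i j)) * cnp x := by
      have := Finset.sum_mul_sq_le_sq_mul_sq Finset.univ (fun j => ‖C i j‖)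
        (fun j => ‖x j‖)
      simpa only [cnp, Complex.sq_norm] using this
    calc Complex.normSq (C.mulVec x i) = ‖C.mulVec x i‖ ^ 2 :=
          (Complex.sq_norm _).symm
      _ ≤ (∑ j, ‖C i j‖ * ‖x j‖) ^ 2 := by
          refine pow_le_pow_left₀ (norm_nonneg _) habs 2
      _ ≤ _ := hcs
  have htr : X.trace.re = ∑ i, ∑ j, Complex.normSq (C i j) := by
    rw [← hCC, Matrix.trace, Complex.re_sum]
    refine Finset.sum_congr rfl fun i _ => ?_
    rw [Matrix.diag_apply, Matrix.mul_apply, Complex.re_sum]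
    refine Finset.sum_congr rfl fun j _ => ?_
    have hji : C j i = (starRingEnd ℂ) (C i j) := by
      have h2 := congrFun (congrFun hCh.eq j) i
      simpa [Matrix.conjTranspose_apply] using h2.symm
    rw [hji, Complex.mul_conj, Complex.ofReal_re]
  rw [htr, Finset.sum_mul]
  calc cnp (C.mulVec x) = ∑ i, Complex.normSq (C.mulVec x i) := rfl
    _ ≤ ∑ i, (∑ j, Complex.normSq (C i j)) * cnp x := Finset.sum_le_sum fun i _ => hrow i

lemma adj_move (B : Matrix (Fin d) (Fin d) ℂ) (a y : Fin d → ℂ) :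
    dotProduct (star a) (B.mulVec y)
      = dotProduct (star (B.conjTranspose.mulVec a)) y := by
  rw [Matrix.star_mulVec, Matrix.conjTranspose_conjTranspose, ← Matrix.dotProduct_mulVec]

lemma trace_mul_vecMulVec (A : Matrix (Fin d) (Fin d) ℂ) (v : Fin d → ℂ) :
    (A * Matrix.vecMulVec v (star v)).trace = dotProduct (star v) (A.mulVec v) := by
  simp only [Matrix.trace, Matrix.diag_apply, Matrix.mul_apply, Matrix.vecMulVec_apply,
    dotProduct, Matrix.mulVec, Pi.star_apply, Finset.mul_sum]
  refine Finset.sum_congr rfl fun i _ => Finset.sum_congr rfl fun j _ => by ring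

/-- scalar endgame -/
lemma aux_core_scalar {E g p ω : ℝ} (hE1 : 0 ≤ 1 + E) (hE2 : 0 ≤ 1 - E)
    (hg1 : 0 ≤ 1 + g) (hg2 : 0 ≤ 1 - g) (hp : 0 ≤ p)
    (h2p : 2 * p ≤ Real.sqrt ((1 + E) * p) * Real.sqrt (1 + g)
      + Real.sqrt ((1 - E) * p) * Real.sqrt (1 - g))
    (hω : 1 - p ≤ ω) :
    1 - 2 * ω ≤ E * g + Real.sqrt ((1 - E ^ 2) * (1 - g ^ 2)) := by
  have hEg : -1 ≤ E * g := by nlinarith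
  have hs0 : 0 ≤ Real.sqrt ((1 - E ^ 2) * (1 - g ^ 2)) := Real.sqrt_nonneg _
  rcases eq_or_lt_of_le hp with hp0 | hppos
  · linarith
  · have hsp : 0 < Real.sqrt p := Real.sqrt_pos.mpr hppos
    have hK : Real.sqrt ((1 + E) * p) = Real.sqrt (1 + E) * Real.sqrt p := Real.sqrt_mul hE1 p
    have hK' : Real.sqrt ((1 - E) * p) = Real.sqrt (1 - E) * Real.sqrt p := Real.sqrt_mul hE2 p
    have hpe : Real.sqrt p * Real.sqrt p = p := Real.mul_self_sqrt hp
    set K := Real.sqrt (1 + E) * Real.sqrt (1 + g) + Real.sqrt (1 - E) * Real.sqrt (1 - g)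
      with hKdef
    have h2p' : 2 * (Real.sqrt p * Real.sqrt p) ≤ (K * Real.sqrt p) := by
      rw [hpe]
      calc 2 * p ≤ _ := h2p
        _ = K * Real.sqrt p := by rw [hK, hK']; ring
    have h2 : 2 * Real.sqrt p ≤ K := by
      have := mul_le_mul_of_nonneg_right h2p' (le_of_lt (inv_pos.mpr hsp))
      field_simp at this
      nlinarith [this, hsp]
    have h4p : 4 * p ≤ K ^ 2 := by nlinarith [h2, hsp, hpe]
    have hKsq : K ^ 2 = 2 + 2 * (E * g) + 2 * Real.sqrt ((1 - E ^ 2) * (1 - g ^ 2)) := by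
      have e1 : Real.sqrt (1 + E) * Real.sqrt (1 + g) * (Real.sqrt (1 - E) * Real.sqrt (1 - g))
          = Real.sqrt ((1 - E ^ 2) * (1 - g ^ 2)) := by
        rw [← Real.sqrt_mul hE1, ← Real.sqrt_mul hE2, ← Real.sqrt_mul (by positivity)]
        congr 1; ring
      have e2 : Real.sqrt (1 + E) ^ 2 = 1 + E := Real.sq_sqrt hE1
      have e3 : Real.sqrt (1 - E) ^ 2 = 1 - E := Real.sq_sqrt hE2
      have e4 : Real.sqrt (1 + g) ^ 2 = 1 + g := Real.sq_sqrt hg1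
      have e5 : Real.sqrt (1 - g) ^ 2 = 1 - g := Real.sq_sqrt hg2
      rw [hKdef]
      nlinarith [e1, e2, e3, e4, e5]
    linarith [h4p, hKsq.le, hKsq.ge]

/-- The scalar certificate extracted from any quantum representation. -/
def Wpred (E ω : Fin 2 → ℝ) : Prop :=
  (∀ x, (E x) ^ 2 ≤ 1) ∧ ∃ g : ℝ, g ^ 2 ≤ 1 ∧
    ∀ x, 1 - 2 * ω x ≤ E x * g + Real.sqrt ((1 - (E x) ^ 2) * (1 - g ^ 2))

theorem isQuantumRep_W {E ω : Fin 2 → ℝ} (h : IsQuantumRep E ω) : Wpred E ω := by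
  obtain ⟨d, ρ, M, O, v, hρpsd, hρtr, hM, hMm, hMp, hO, hOv, hv, hgap, hE, hω⟩ := h
  have hcnpv : cnp v = 1 := hv
  have hEb : ∀ x, (0 ≤ 1 - E x) ∧ (0 ≤ 1 + E x) := by
    intro x
    constructor
    · have h0 := psd_trace_mul_re_nonneg (hρpsd x) hMm
      have ht : (ρ x * (1 - M)).trace = 1 - (E x : ℂ) := by
        rw [Matrix.mul_sub, Matrix.mul_one, Matrix.trace_sub, hρtr x, hE x]
      rw [ht] at h0
      simpa using h0
    · have h0 := psd_trace_mul_re_nonneg (hρpsd x) hMp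
      have ht : (ρ x * (1 + M)).trace = 1 + (E x : ℂ) := by
        rw [Matrix.mul_add, Matrix.mul_one, Matrix.trace_add, hρtr x, hE x]
      rw [ht] at h0
      simpa using h0
  set g : ℝ := (dotProduct (star v) (M.mulVec v)).re with hgdef
  have hvv : dotProduct (star v) v = (1 : ℂ) := by
    rw [star_dot_self, hcnpv]; norm_num
  have hgb1 : 0 ≤ 1 - g := by
    have h0 := hMm.re_dotProduct_nonneg v
    have ht : dotProduct (star v) ((1 - M).mulVec v)
        = dotProduct (star v) v - dotProduct (star v) (M.mulVec v) := by
      rw [Matrix.sub_mulVec, Matrix.one_mulVec, dotProduct_sub]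
    rw [ht, hvv] at h0
    simpa using h0
  have hgb2 : 0 ≤ 1 + g := by
    have h0 := hMp.re_dotProduct_nonneg v
    have ht : dotProduct (star v) ((1 + M).mulVec v)
        = dotProduct (star v) v + dotProduct (star v) (M.mulVec v) := by
      rw [Matrix.add_mulVec, Matrix.one_mulVec, dotProduct_add]
    rw [ht, hvv] at h0
    simpa using h0
  refine ⟨fun x => by nlinarith [(hEb x).1, (hEb x).2], g, by nlinarith [hgb1, hgb2], ?_⟩
  intro x
  set S := (hρpsd x).sqrt with hSdef
  have hSS : S * S = ρ x := (hρpsd x).sqrt_mul_self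
  have hSh : S.IsHermitian := (hρpsd x).posSemidef_sqrt.1
  set w := S.mulVec v with hwdef
  set p := cnp w with hpdef
  have hpeq : dotProduct (star v) ((ρ x).mulVec v) = (p : ℂ) := by
    rw [← hSS, ← Matrix.mulVec_mulVec, ← herm_shift hSh, star_dot_self]
  have hωp : 1 - p ≤ ω x := by
    have h0 := psd_trace_mul_re_nonneg (hρpsd x) hgap
    have ht : (ρ x * (O - (1 - Matrix.vecMulVec v (star v)))).trace
        = (ρ x * O).trace - 1 + (p : ℂ) := by
      rw [Matrix.mul_sub, Matrix.mul_sub, Matrix.mul_one, Matrix.trace_sub, Matrix.trace_sub,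
        hρtr x, trace_mul_vecMulVec, hpeq]
      ring
    rw [ht] at h0
    have h1 : (0:ℝ) ≤ ((ρ x * O).trace).re - 1 + p := by
      simpa [Complex.sub_re, Complex.add_re, Complex.one_re, Complex.ofReal_re] using h0
    linarith [hω x]
  have bound : ∀ (P : Matrix (Fin d) (Fin d) ℂ), P.PosSemidef → ∀ (q : ℝ),
      ((ρ x * P).trace).re = q →
      (dotProduct (star w) ((S * P).mulVec v)).re
        ≤ Real.sqrt (q * p) * Real.sqrt ((dotProduct (star v) (P.mulVec v)).re) := by
    intro P hP q hq
    set U := hP.sqrt with hUdef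
    have hUU : U * U = P := hP.sqrt_mul_self
    have hUh : U.IsHermitian := hP.posSemidef_sqrt.1
    set y := U.mulVec v with hydef
    have hy : (dotProduct (star v) (P.mulVec v)).re = cnp y := by
      rw [← hUU, ← Matrix.mulVec_mulVec, ← herm_shift hUh, star_dot_self, Complex.ofReal_re]
    have hterm : dotProduct (star w) ((S * P).mulVec v)
        = dotProduct (star ((U * S).mulVec w)) y := by
      have h1 : (S * P) = (S * U) * U := by rw [mul_assoc, hUU]
      rw [h1, ← Matrix.mulVec_mulVec, adj_move, Matrix.conjTranspose_mul, hUh.eq, hSh.eq]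
    have hXpsd : (S * P * S).PosSemidef := by
      have h2 := hP.conjTranspose_mul_mul_same S
      rwa [hSh.eq] at h2
    have hXe : dotProduct (star w) ((S * P * S).mulVec w)
        = (cnp ((U * S).mulVec w) : ℂ) := by
      have h1 : S * P * S = (S * U) * (U * S) := by
        rw [← hUU]; simp only [mul_assoc]
      rw [h1, ← Matrix.mulVec_mulVec, adj_move, Matrix.conjTranspose_mul, hUh.eq, hSh.eq,
        star_dot_self]
    have hXt : ((S * P * S).trace).re = q := by
      rw [Matrix.trace_mul_cycle, hSS, hq]
    have hcnpu : cnp ((U * S).mulVec w) ≤ q * p := by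
      have h3 := psd_quadform_le_trace hXpsd w
      rw [hXe, Complex.ofReal_re, hXt] at h3
      exact h3
    calc (dotProduct (star w) ((S * P).mulVec v)).re
        = (dotProduct (star ((U * S).mulVec w)) y).re := by rw [hterm]
      _ ≤ Real.sqrt (cnp ((U * S).mulVec w)) * Real.sqrt (cnp y) := re_dot_le _ _
      _ ≤ Real.sqrt (q * p) * Real.sqrt (cnp y) := by
          apply mul_le_mul_of_nonneg_right (Real.sqrt_le_sqrt hcnpu) (Real.sqrt_nonneg _)
      _ = Real.sqrt (q * p) * Real.sqrt ((dotProduct (star v) (P.mulVec v)).re) := by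
          rw [hy]
  have hbp : (dotProduct (star v) ((1 + M).mulVec v)).re = 1 + g := by
    rw [Matrix.add_mulVec, Matrix.one_mulVec, dotProduct_add, hvv]
    simp [hgdef]
  have hbm : (dotProduct (star v) ((1 - M).mulVec v)).re = 1 - g := by
    rw [Matrix.sub_mulVec, Matrix.one_mulVec, dotProduct_sub, hvv]
    simp [hgdef]
  have hqp : ((ρ x * (1 + M)).trace).re = 1 + E x := by
    rw [Matrix.mul_add, Matrix.mul_one, Matrix.trace_add, hρtr x, hE x]
    simp
  have hqm : ((ρ x * (1 - M)).trace).re = 1 - E x := by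
    rw [Matrix.mul_sub, Matrix.mul_one, Matrix.trace_sub, hρtr x, hE x]
    simp
  have bndp := bound (1 + M) hMp (1 + E x) hqp
  have bndm := bound (1 - M) hMm (1 - E x) hqm
  rw [hbp] at bndp
  rw [hbm] at bndm
  have hvsplit : (1 + M).mulVec v + (1 - M).mulVec v = v + v := by
    rw [Matrix.add_mulVec, Matrix.sub_mulVec, Matrix.one_mulVec]
    abel
  have hterm2 : (S * (1 + M)).mulVec v + (S * (1 - M)).mulVec v = w + w := by
    rw [← Matrix.mulVec_mulVec, ← Matrix.mulVec_mulVec, ← Matrix.mulVec_add, hvsplit,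
      Matrix.mulVec_add]
  have hsumc : dotProduct (star w) ((S * (1 + M)).mulVec v)
      + dotProduct (star w) ((S * (1 - M)).mulVec v) = ((2 * p : ℝ) : ℂ) := by
    rw [← dotProduct_add, hterm2, dotProduct_add, star_dot_self]
    push_cast
    ring
  have hsum : (dotProduct (star w) ((S * (1 + M)).mulVec v)).re
      + (dotProduct (star w) ((S * (1 - M)).mulVec v)).re = 2 * p := by
    have h4 := congrArg Complex.re hsumc
    simpa [Complex.add_re, Complex.ofReal_re] using h4
  have h2p : 2 * p ≤ Real.sqrt ((1 + E x) * p) * Real.sqrt (1 + g)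
      + Real.sqrt ((1 - E x) * p) * Real.sqrt (1 - g) := by
    linarith [bndp, bndm]
  exact aux_core_scalar (hEb x).2 (hEb x).1 hgb2 hgb1 (cnp_nonneg w) h2p hωp

/-- The certificate set is convex. -/
theorem wpred_convex : Convex ℝ {b : (Fin 2 → ℝ) × (Fin 2 → ℝ) | Wpred b.1 b.2} := by
  intro P hP Q hQ t s ht hs hts
  obtain ⟨hPE, gP, hgP, hPk⟩ := hP
  obtain ⟨hQE, gQ, hgQ, hQk⟩ := hQ
  have hfst : ∀ j, (t • P + s • Q).1 j = t * P.1 j + s * Q.1 j := fun j => rfl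
  have hsnd : ∀ j, (t • P + s • Q).2 j = t * P.2 j + s * Q.2 j := fun j => rfl
  refine ⟨fun x => ?_, t * gP + s * gQ, ?_, fun x => ?_⟩
  · rw [hfst]
    nlinarith [mul_nonneg (mul_nonneg ht hs) (sq_nonneg (P.1 x - Q.1 x)),
      mul_le_mul_of_nonneg_left (hPE x) ht, mul_le_mul_of_nonneg_left (hQE x) hs]
  · nlinarith [mul_nonneg (mul_nonneg ht hs) (sq_nonneg (gP - gQ)),
      mul_le_mul_of_nonneg_left hgP ht, mul_le_mul_of_nonneg_left hgQ hs]
  · rw [hfst, hsnd]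
    have hcon := aux_F_concave (hPE x) hgP (hQE x) hgQ ht hs hts
    have h1 : t * (1 - 2 * P.2 x) ≤ t * (P.1 x * gP + Real.sqrt ((1 - P.1 x ^ 2) * (1 - gP ^ 2)))
      := mul_le_mul_of_nonneg_left (hPk x) ht
    have h2 : s * (1 - 2 * Q.2 x) ≤ s * (Q.1 x * gQ + Real.sqrt ((1 - Q.1 x ^ 2) * (1 - gQ ^ 2)))
      := mul_le_mul_of_nonneg_left (hQk x) hs
    have h3 : 1 - 2 * (t * P.2 x + s * Q.2 x)
        = t * (1 - 2 * P.2 x) + s * (1 - 2 * Q.2 x) := by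
      have h : s = 1 - t := by linarith
      subst h; ring
    linarith [hcon, h1, h2]

/-- Corollary 1: every point of the quantum set is realized (without shared
randomness) by a two-dimensional Bloch representation with `‖m‖ ≤ 1`. -/
theorem mem_quantumSet_bloch_rep (E ω : Fin 2 → ℝ)
    (h : (E, ω) ∈ QuantumSet) :
    ∃ (n : Fin 2 → Fin 3 → ℝ) (m k : Fin 3 → ℝ),
      (∀ x, ∑ i, n x i * n x i = 1) ∧ (∑ i, m i * m i ≤ 1) ∧
      (∑ i, k i * k i = 1) ∧
      (∀ x, E x = ∑ i, n x i * m i) ∧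
      (∀ x, (1 + ∑ i, n x i * k i) / 2 ≤ ω x) := by
  have hsub : {b : (Fin 2 → ℝ) × (Fin 2 → ℝ) | IsQuantumRep b.1 b.2}
      ⊆ {b : (Fin 2 → ℝ) × (Fin 2 → ℝ) | Wpred b.1 b.2} :=
    fun b hb => isQuantumRep_W hb
  have hW : Wpred E ω := convexHull_min hsub wpred_convex h
  obtain ⟨hEsq, g, hg, hkey⟩ := hW
  refine ⟨fun x => ![E x, Real.sqrt (1 - (E x) ^ 2), 0],
    ![1, 0, 0], ![-g, -Real.sqrt (1 - g ^ 2), 0], ?_, ?_, ?_, ?_, ?_⟩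
  · intro x
    have h1 : Real.sqrt (1 - (E x) ^ 2) * Real.sqrt (1 - (E x) ^ 2) = 1 - (E x) ^ 2 :=
      Real.mul_self_sqrt (by linarith [hEsq x])
    simp [Fin.sum_univ_three, h1]
    ring_nf
  · simp [Fin.sum_univ_three]
  · have h1 : Real.sqrt (1 - g ^ 2) * Real.sqrt (1 - g ^ 2) = 1 - g ^ 2 :=
      Real.mul_self_sqrt (by linarith)
    simp [Fin.sum_univ_three, h1]
    ring_nf
  · intro x
    simp [Fin.sum_univ_three]
  · intro x
    have h1 : Real.sqrt ((1 - (E x) ^ 2) * (1 - g ^ 2))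
        = Real.sqrt (1 - (E x) ^ 2) * Real.sqrt (1 - g ^ 2) :=
      Real.sqrt_mul (by linarith [hEsq x]) _
    have h2 := hkey x
    rw [h1] at h2
    simp only [Fin.sum_univ_three, Matrix.cons_val_zero, Matrix.cons_val_one, Matrix.head_cons]
    simp
    linarith

end
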